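/- Let X be a Banach space with dim X ≥ 2. Then there exist C > 0 and a convex compact subset W of 𝓛(X) such that for every x in the unit ball of X there is B ∈ W with ‖x − B(x)‖ = 0, while ‖I − B‖ ≥ C for all B ∈ W, where I is the identity operator. -/

import Mathlib

/-! Auxiliary material for Statement 19. -/

/-- The parameter set: `2 × 2` "matrices" with trace `1` and entries in `[-1, 1]`.
It contains all matrices `c cᵀ / ‖c‖²` and is convex and compact. -/
def statement19Kset : Set (Fin 2 → Fin 2 → ℝ) :=
  {a | a 0 0 + a 1 1 = 1} ∩ Set.univ.pi (fun _ => Set.univ.pi fun _ => Set.Icc (-1:ℝ) 1)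

lemma statement19Kset_convex : Convex ℝ statement19Kset := by
  rintro a ⟨ha1, ha2⟩ b ⟨hb1, hb2⟩ t s ht hs hts
  have ha1' : a 0 0 + a 1 1 = 1 := ha1
  have hb1' : b 0 0 + b 1 1 = 1 := hb1
  constructor
  · show (t • a + s • b) 0 0 + (t • a + s • b) 1 1 = 1
    simp only [Pi.add_apply, Pi.smul_apply, smul_eq_mul]
    nlinarith
  · intro i _ j _
    have h1 := ha2 i (Set.mem_univ i) j (Set.mem_univ j)
    have h2 := hb2 i (Set.mem_univ i) j (Set.mem_univ j)
    simp only [Set.mem_Icc] at h1 h2 ⊢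
    simp only [Pi.add_apply, Pi.smul_apply, smul_eq_mul]
    constructor <;> nlinarith

lemma statement19Kset_compact : IsCompact statement19Kset := by
  have hKcl : IsClosed statement19Kset := by
    apply IsClosed.inter
    · have hc : Continuous fun a : Fin 2 → Fin 2 → ℝ => a 0 0 + a 1 1 :=
        by fun_prop
      exact isClosed_eq hc continuous_const
    · exact isClosed_set_pi fun i _ => isClosed_set_pi fun j _ => isClosed_Icc
  exact (isCompact_univ_pi fun i => isCompact_univ_pi fun j => isCompact_Icc).of_isClosed_subset
    hKcl Set.inter_subset_right

lemma statement19Kset_mem_of (c : Fin 2 → ℝ) (hq : c 0 ^ 2 + c 1 ^ 2 ≠ 0) :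
    (fun i j => c i * c j / (c 0 ^ 2 + c 1 ^ 2)) ∈ statement19Kset := by
  have hq' : 0 < c 0 ^ 2 + c 1 ^ 2 := lt_of_le_of_ne (by positivity) (Ne.symm hq)
  constructor
  · show c 0 * c 0 / _ + c 1 * c 1 / _ = 1
    field_simp
  · intro i _ j _
    simp only [Set.mem_Icc]
    constructor
    · rw [le_div_iff₀ hq']
      fin_cases i <;> fin_cases j <;> simp only [Fin.mk_zero, Fin.mk_one] <;>
        nlinarith [sq_nonneg (c 0 + c 1), sq_nonneg (c 0 - c 1), sq_nonneg (c 0), sq_nonneg (c 1)]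
    · rw [div_le_one hq']
      fin_cases i <;> fin_cases j <;> simp only [Fin.mk_zero, Fin.mk_one] <;>
        nlinarith [sq_nonneg (c 0 + c 1), sq_nonneg (c 0 - c 1), sq_nonneg (c 0), sq_nonneg (c 1)]

lemma statement19Kset_mem_diag : (fun i j => if i = j then (1:ℝ)/2 else 0) ∈ statement19Kset := by
  constructor
  · norm_num
  · intro i _ j _
    by_cases h : i = j <;> simp [h] <;> norm_num

/-- A linearly independent pair in a real normed space admits a dual pair of continuous
functionals, by Hahn–Banach. -/
lemma statement19_dual_family {X : Type*} [NormedAddCommGroup X] [NormedSpace ℝ X]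
    {e : Fin 2 → X} (he : LinearIndependent ℝ e) :
    ∃ f : Fin 2 → (X →L[ℝ] ℝ), ∀ i j, f i (e j) = if i = j then 1 else 0 := by
  set Y := Submodule.span ℝ (Set.range e) with hY
  haveI : FiniteDimensional ℝ Y := FiniteDimensional.span_of_finite ℝ (Set.finite_range e)
  let b : Module.Basis (Fin 2) ℝ Y := Module.Basis.span he
  have key : ∀ i : Fin 2, ∃ g : X →L[ℝ] ℝ, ∀ y : Y, g y = b.coord i y := by
    intro i
    obtain ⟨g, hg, -⟩ := exists_extension_norm_eq Y (LinearMap.toContinuousLinearMap (b.coord i))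
    exact ⟨g, fun y => by simpa using hg y⟩
  choose f hf using key
  refine ⟨f, fun i j => ?_⟩
  have hmem : e j ∈ Y := Submodule.subset_span (Set.mem_range_self j)
  have hbj : (⟨e j, hmem⟩ : Y) = b j := (Module.Basis.span_apply he j).symm
  have h2 := hf i ⟨e j, hmem⟩
  rw [hbj] at h2
  simp only [Module.Basis.coord_apply, Module.Basis.repr_self] at h2
  have h3 : ((b j : Y) : X) = e j := congrArg Subtype.val (Module.Basis.span_apply he j)
  rw [h3] at h2
  rw [h2, Finsupp.single_apply]
  simp [eq_comm]

/-- If `X` is a Banach space with `dim X ≥ 2`, then there exist `C > 0` and a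
convex, (operator-norm) compact set `W ⊆ 𝓛(X)` such that every `x` in the unit ball of `X`
satisfies `‖x - B x‖ = 0` for some `B ∈ W`, while `‖I - B‖ ≥ C` for all `B ∈ W`. -/
theorem statement19 {X : Type*} [NormedAddCommGroup X] [NormedSpace ℝ X] [CompleteSpace X]
    (hdim : 2 ≤ Module.rank ℝ X) :
    ∃ C > (0:ℝ), ∃ W : Set (X →L[ℝ] X), Convex ℝ W ∧ IsCompact W ∧
      (∀ x : X, ‖x‖ ≤ 1 → ∃ B ∈ W, ‖x - B x‖ = 0) ∧
      ∀ B ∈ W, C ≤ ‖ContinuousLinearMap.id ℝ X - B‖ := by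
  classical
  -- extract a linearly independent pair and a dual pair of functionals
  obtain ⟨e, he⟩ : ∃ e : Fin 2 → X, LinearIndependent ℝ e := by
    obtain ⟨s, hs2, hsli⟩ := le_rank_iff_exists_linearIndependent_finset.mp
      (by exact_mod_cast hdim)
    let eqv : Fin 2 ≃ s := (s.equivFinOfCardEq hs2).symm
    exact ⟨fun i => (eqv i : X), hsli.comp eqv eqv.injective⟩
  obtain ⟨f, hf⟩ := statement19_dual_family he
  -- the rank-two "projection" P and the parametrized family of perturbations
  let P : X →L[ℝ] X := ∑ i, (f i).smulRight (e i)
  let L : (Fin 2 → Fin 2 → ℝ) →ₗ[ℝ] (X →L[ℝ] X) :=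
    { toFun := fun a => ∑ i, ∑ j, a i j • (f j).smulRight (e i)
      map_add' := by
        intro a b
        simp [add_smul, Finset.sum_add_distrib]
      map_smul' := by
        intro c a
        simp [Finset.smul_sum, smul_smul] }
  let D : X →L[ℝ] X := ContinuousLinearMap.id ℝ X - P
  have hPapp : ∀ x, P x = ∑ i : Fin 2, f i x • e i := by
    intro x
    simp [P, ContinuousLinearMap.sum_apply]
  have hLapp : ∀ a x, L a x = ∑ i : Fin 2, ∑ j : Fin 2, a i j • (f j x • e i) := by
    intro a x
    simp [L, ContinuousLinearMap.sum_apply]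
  have hPe : ∀ j, P (e j) = e j := by
    intro j
    simp [hPapp, hf, ite_smul]
  have hLe : ∀ a (j : Fin 2), L a (e j) = ∑ i : Fin 2, a i j • e i := by
    intro a j
    rw [hLapp]
    refine Finset.sum_congr rfl fun i _ => ?_
    simp [hf, smul_ite]
  refine ⟨(‖f 0‖ * ‖e 0‖ + ‖f 1‖ * ‖e 1‖)⁻¹, ?_,
    (fun a => D + L a) '' statement19Kset, ?_, ?_, ?_, ?_⟩
  · -- positivity of C
    have h0 : (1:ℝ) ≤ ‖f 0‖ * ‖e 0‖ := by
      have := (f 0).le_opNorm (e 0)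
      rw [hf 0 0] at this
      simpa using this
    have h1 : (1:ℝ) ≤ ‖f 1‖ * ‖e 1‖ := by
      have := (f 1).le_opNorm (e 1)
      rw [hf 1 1] at this
      simpa using this
    positivity
  · -- convexity of W
    have h1 : Convex ℝ (L '' statement19Kset) := statement19Kset_convex.linear_image L
    have h2 := h1.translate D
    simpa [Set.image_image] using h2
  · -- compactness of W
    exact statement19Kset_compact.image (continuous_const.add L.continuous_of_finiteDimensional)
  · -- every point of the unit ball is fixed by some member of W
    intro x _
    set q : ℝ := f 0 x ^ 2 + f 1 x ^ 2 with hq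
    by_cases hq0 : q = 0
    · have hf0 : f 0 x = 0 ∧ f 1 x = 0 := by
        constructor <;> nlinarith [sq_nonneg (f 0 x), sq_nonneg (f 1 x)]
      refine ⟨D + L (fun i j => if i = j then (1:ℝ)/2 else 0),
        ⟨_, statement19Kset_mem_diag, rfl⟩, ?_⟩
      have : (D + L fun i j => if i = j then (1:ℝ)/2 else 0) x = x := by
        rw [ContinuousLinearMap.add_apply, ContinuousLinearMap.sub_apply,
          ContinuousLinearMap.id_apply, hLapp, hPapp]
        rw [Fin.sum_univ_two, Fin.sum_univ_two, Fin.sum_univ_two, Fin.sum_univ_two,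
          hf0.1, hf0.2]
        simp
      rw [this]
      simp
    · set a : Fin 2 → Fin 2 → ℝ := fun i j => f i x * f j x / q with ha
      refine ⟨D + L a, ⟨a, statement19Kset_mem_of _ (by rw [← hq] at *; exact hq0), rfl⟩, ?_⟩
      have key : L a x = P x := by
        rw [hLapp, hPapp]
        refine Finset.sum_congr rfl fun i _ => ?_
        rw [Fin.sum_univ_two, smul_smul, smul_smul, ← add_smul]
        congr 1
        show f i x * f 0 x / q * f 0 x + f i x * f 1 x / q * f 1 x = f i x
        field_simp
        ring
      have : (D + L a) x = x := by
        rw [ContinuousLinearMap.add_apply, ContinuousLinearMap.sub_apply,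
          ContinuousLinearMap.id_apply, key]
        abel
      rw [this]
      simp
  · -- uniform lower bound on ‖I - B‖
    rintro B ⟨a, haK, rfl⟩
    have hIB : ContinuousLinearMap.id ℝ X - (D + L a) = P - L a := by
      simp only [D]
      abel
    rw [hIB]
    have h0 : ∀ j : Fin 2, f j ((P - L a) (e j)) = 1 - a j j := by
      intro j
      rw [ContinuousLinearMap.sub_apply, map_sub, hPe j, hLe a j, map_sum]
      have : ∀ i : Fin 2, f j (a i j • e i) = a i j * (if j = i then 1 else 0) := by
        intro i
        rw [map_smul, hf]
        simp
      simp only [this, mul_ite, mul_one, mul_zero, Finset.sum_ite_eq, Finset.mem_univ,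
        if_true]
      rw [hf]
      simp
    have hb : ∀ j : Fin 2, f j ((P - L a) (e j)) ≤ ‖f j‖ * (‖P - L a‖ * ‖e j‖) := by
      intro j
      refine le_trans (le_abs_self _) (le_trans ((f j).le_opNorm _) ?_)
      exact mul_le_mul_of_nonneg_left ((P - L a).le_opNorm (e j)) (norm_nonneg _)
    have htr : a 0 0 + a 1 1 = 1 := haK.1
    have hsum : 1 ≤ (‖f 0‖ * ‖e 0‖ + ‖f 1‖ * ‖e 1‖) * ‖P - L a‖ := by
      have b0 := hb 0
      have b1 := hb 1
      rw [h0 0] at b0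
      rw [h0 1] at b1
      nlinarith
    have hNpos : (0:ℝ) < ‖f 0‖ * ‖e 0‖ + ‖f 1‖ * ‖e 1‖ := by
      have h00 : (1:ℝ) ≤ ‖f 0‖ * ‖e 0‖ := by
        have := (f 0).le_opNorm (e 0)
        rw [hf 0 0] at this
        simpa using this
      have h11 : (0:ℝ) ≤ ‖f 1‖ * ‖e 1‖ := mul_nonneg (norm_nonneg _) (norm_nonneg _)
      linarith
    have hC := mul_inv_cancel₀ (ne_of_gt hNpos)
    nlinarith [norm_nonneg (P - L a)]
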